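/- Let Δ be an irreducible root system, μ = Σ m_i α_i its highest root, and suppose m_i = 2. Let Δ⁺_k = {α ∈ Δ⁺ : n_i(α) = k}. If Δ⁺_2 = {μ} (the only positive root with coefficient 2 at α_i is the highest root), then for every α ∈ Δ⁺_1, μ - α ∈ Δ⁺_1; in particular the number of β ∈ Δ⁺_1 with μ - β ∈ Δ equals card(Δ⁺_1). -/

import Mathlib

open scoped RealInnerProductSpace

/-- Let `Δ` be an irreducible root system with simple roots
`α_1,…,α_l`, highest root `μ = Σ m_i α_i` with `m_i = 2`, and
`Δ⁺_k = {α ∈ Δ⁺ : n_i(α) = k}`.  If `Δ⁺_2 = {μ}` then for every `α ∈ Δ⁺_1`,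
`μ - α ∈ Δ⁺_1`; in particular `{β ∈ Δ⁺_1 : μ - β ∈ Δ} = Δ⁺_1` (so its number
of elements is `card Δ⁺_1`). -/
theorem stmt13
    {V : Type*} [NormedAddCommGroup V] [InnerProductSpace ℝ V]
    {l : ℕ} (Δ : Set V) (α : Fin l → V) (coeff : V → Fin l → ℤ)
    (hli : LinearIndependent ℝ α)
    (hsimple : ∀ i, α i ∈ Δ)
    (hexpand : ∀ β ∈ Δ, β = ∑ i, (coeff β i : ℝ) • α i)
    (hsign : ∀ β ∈ Δ, (∀ i, 0 ≤ coeff β i) ∨ (∀ i, coeff β i ≤ 0))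
    (hcrys : ∀ β ∈ Δ, ∀ γ ∈ Δ, ∃ z : ℤ, 2 * ⟪β, γ⟫ = (z : ℝ) * ⟪γ, γ⟫)
    (hstring : ∀ β ∈ Δ, ∀ γ ∈ Δ, 0 < ⟪β, γ⟫ → β ≠ γ → β - γ ∈ Δ)
    (μ : V) (hμ : μ ∈ Δ)
    (hhighest : ∀ β ∈ Δ, ∀ t, coeff β t ≤ coeff μ t)
    (i : Fin l) (hmi : coeff μ i = 2)
    (P1 P2 : Set V)
    (hP1 : P1 = {β ∈ Δ | (∀ t, 0 ≤ coeff β t) ∧ coeff β i = 1})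
    (hP2 : P2 = {β ∈ Δ | (∀ t, 0 ≤ coeff β t) ∧ coeff β i = 2})
    (honly : P2 = {μ}) :
    (∀ β ∈ P1, μ - β ∈ P1) ∧
    {β ∈ P1 | μ - β ∈ Δ} = P1 := by
  classical
  subst hP1
  subst hP2
  -- linear independence: coefficients of equal sums agree
  have key : ∀ (a b : Fin l → ℝ), ∑ t, a t • α t = ∑ t, b t • α t → ∀ t, a t = b t := by
    intro a b h t
    have h0 : ∑ s, (a s - b s) • α s = 0 := by
      simp only [sub_smul, Finset.sum_sub_distrib, h, sub_self]
    have := Fintype.linearIndependent_iff.mp hli (fun s => a s - b s) h0 t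
    linarith
  -- coefficients of a difference of roots
  have csub : ∀ β ∈ Δ, ∀ γ ∈ Δ, β - γ ∈ Δ → ∀ t,
      coeff (β - γ) t = coeff β t - coeff γ t := by
    intro β hβ γ hγ hd t
    have h2 : ∑ t, ((coeff (β - γ) t : ℝ)) • α t
        = ∑ t, (((coeff β t : ℝ)) - ((coeff γ t : ℝ))) • α t := by
      rw [← hexpand _ hd]
      calc β - γ = (∑ t, (coeff β t : ℝ) • α t) - ∑ t, (coeff γ t : ℝ) • α t := by
            rw [← hexpand β hβ, ← hexpand γ hγ]
        _ = ∑ t, (((coeff β t : ℝ)) - ((coeff γ t : ℝ))) • α t := by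
            rw [← Finset.sum_sub_distrib]
            simp [sub_smul]
    have h3 := key _ _ h2 t
    exact_mod_cast h3
  -- coefficients of simple roots
  have csimple : ∀ s t, coeff (α s) t = if s = t then 1 else 0 := by
    intro s t
    have h2 : ∑ t, ((coeff (α s) t : ℝ)) • α t
        = ∑ t, (if s = t then (1 : ℝ) else 0) • α t := by
      rw [← hexpand _ (hsimple s)]
      simp
    have h3 := key _ _ h2 t
    split_ifs with h
    · simpa [h] using h3
    · simpa [h] using h3
  have hα0 : ∀ t, α t ≠ 0 := fun t => hli.ne_zero t
  -- μ ≠ 0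
  have hμ0 : μ ≠ 0 := by
    intro h
    have h2 : ∑ t, ((coeff μ t : ℝ)) • α t = ∑ t, (0 : ℝ) • α t := by
      rw [← hexpand μ hμ]; simp [h]
    have h3 := key _ _ h2 i
    rw [hmi] at h3
    norm_num at h3
  have mpos : (0 : ℝ) < ⟪μ, μ⟫ := by
    rcases lt_or_eq_of_le (real_inner_self_nonneg (x := μ)) with h | h
    · exact h
    · exact absurd ((inner_self_eq_zero (𝕜 := ℝ)).mp h.symm) hμ0
  -- coefficients of μ are nonnegative
  have hm : ∀ t, 0 ≤ coeff μ t := by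
    rcases hsign μ hμ with h | h
    · exact h
    · exfalso; have := h i; omega
  -- inner product expansion
  have ipμ : ∀ γ ∈ Δ, ⟪μ, γ⟫ = ∑ t, (coeff γ t : ℝ) * ⟪μ, α t⟫ := by
    intro γ hγ
    conv_lhs => rw [hexpand γ hγ]
    rw [inner_sum]
    simp [real_inner_smul_right]
  -- fact: for t ≠ i, ⟪μ, α t⟫ ≤ 0
  have fact6 : ∀ t, t ≠ i → ⟪μ, α t⟫ ≤ 0 := by
    intro t hti
    by_contra hpos
    push_neg at hpos
    have hne : μ ≠ α t := by
      intro h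
      have h2 := csimple t i
      rw [← h, hmi] at h2
      simp [hti] at h2
    have hρ : μ - α t ∈ Δ := hstring μ hμ (α t) (hsimple t) hpos hne
    have hcρ : ∀ s, coeff (μ - α t) s = coeff μ s - coeff (α t) s :=
      csub μ hμ (α t) (hsimple t) hρ
    have hcρi : coeff (μ - α t) i = 2 := by
      rw [hcρ i, hmi, csimple]
      simp [hti]
    have hnn : ∀ s, 0 ≤ coeff (μ - α t) s := by
      rcases hsign _ hρ with h | h
      · exact h
      · exfalso; have := h i; omega
    have hmem : μ - α t ∈ ({μ} : Set V) := by
      rw [← honly]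
      exact ⟨hρ, hnn, hcρi⟩
    have : μ - α t = μ := hmem
    have : α t = 0 := by
      have := sub_eq_self.mp this
      simpa using this
    exact hα0 t this
  -- ⟪μ,μ⟫ ≤ 2 * ⟪μ, α i⟫
  set X : ℝ := ⟪μ, α i⟫ with hXdef
  have hsum : ⟪μ, μ⟫ = ∑ t, (coeff μ t : ℝ) * ⟪μ, α t⟫ := ipμ μ hμ
  have hX2 : ⟪μ, μ⟫ ≤ 2 * X := by
    rw [hsum]
    have hb : ∀ t ∈ Finset.univ, (coeff μ t : ℝ) * ⟪μ, α t⟫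
        ≤ (if t = i then 2 * X else 0) := by
      intro t _
      by_cases h : t = i
      · subst h; rw [hmi]; simp; exact hXdef.ge
      · simp only [h, if_false]
        have h1 : (0 : ℝ) ≤ (coeff μ t : ℝ) := by exact_mod_cast hm t
        exact mul_nonpos_of_nonneg_of_nonpos h1 (fact6 t h)
    calc ∑ t, (coeff μ t : ℝ) * ⟪μ, α t⟫ ≤ ∑ t, (if t = i then 2 * X else 0) :=
          Finset.sum_le_sum hb
      _ = 2 * X := by simp
  have hXpos : 0 < X := by linarith
  -- μ ≠ α i
  have hμαi : μ ≠ α i := by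
    intro h
    have h2 := csimple i i
    rw [← h, hmi] at h2
    simp at h2
  -- X < ⟪μ,μ⟫
  have hXlt : X < ⟪μ, μ⟫ := by
    by_contra hge
    push_neg at hge
    -- η = α i - μ ∈ Δ
    have hηΔ : α i - μ ∈ Δ := by
      apply hstring (α i) (hsimple i) μ hμ _ (Ne.symm hμαi)
      rw [real_inner_comm]
      linarith
    have hcη : ∀ s, coeff (α i - μ) s = coeff (α i) s - coeff μ s :=
      csub (α i) (hsimple i) μ hμ hηΔ
    have hcηi : coeff (α i - μ) i = -1 := by
      rw [hcη i, hmi, csimple]; simp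
    rcases lt_or_eq_of_le hge with hgt | heq
    · -- X > ⟪μ,μ⟫ : then 2μ - α i ∈ Δ with coeff 3 at i
      have hip : (0 : ℝ) < ⟪μ, α i - μ⟫ := by
        rw [inner_sub_right]
        linarith [hXdef]
      have hne : μ ≠ α i - μ := by
        intro h
        have := hcηi
        rw [← h, hmi] at this
        omega
      have hζΔ : μ - (α i - μ) ∈ Δ := hstring μ hμ _ hηΔ hip hne
      have hcζ := csub μ hμ _ hηΔ hζΔ i
      rw [hmi, hcηi] at hcζ
      have := hhighest _ hζΔ i
      rw [hcζ, hmi] at this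
      omega
    · -- X = ⟪μ,μ⟫
      -- first: ⟪α i, α i⟫ > ⟪μ,μ⟫
      have hαα : ⟪μ, μ⟫ < ⟪α i, α i⟫ := by
        have h0 : (0 : ℝ) ≤ ⟪μ - α i, μ - α i⟫ := real_inner_self_nonneg
        have hexp : ⟪μ - α i, μ - α i⟫ = ⟪μ, μ⟫ - 2 * X + ⟪α i, α i⟫ := by
          rw [inner_sub_sub_self]
          ring_nf
          rw [real_inner_comm (α i) μ]
          linarith [hXdef, real_inner_comm μ (α i)]
        rcases eq_or_lt_of_le h0 with h00 | h00
        · exfalso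
          have : μ - α i = 0 := (inner_self_eq_zero (𝕜 := ℝ)).mp h00.symm
          exact hμαi (by rwa [sub_eq_zero] at this)
        · rw [hexp] at h00
          linarith
      -- η - α i = -μ ∈ Δ
      have hip2 : (0 : ℝ) < ⟪α i - μ, α i⟫ := by
        rw [inner_sub_left]
        linarith [hXdef, hαα]
      have hne2 : α i - μ ≠ α i := by
        intro h
        have := hcηi
        rw [h, csimple] at this
        simp at this
      have hnegΔ : α i - μ - α i ∈ Δ := hstring _ hηΔ (α i) (hsimple i) hip2 hne2
      have hrw : α i - μ - α i = -μ := by abel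
      rw [hrw] at hnegΔ
      have hcneg : ∀ s, coeff (-μ) s = -coeff μ s := by
        intro s
        have h1 := csub _ hηΔ (α i) (hsimple i) (hrw ▸ hnegΔ)
        rw [hrw] at h1
        rw [h1 s, hcη s]
        ring
      -- all ⟪μ, α t⟫ = 0 for t ≠ i
      have hzero : ∀ t, t ≠ i → ⟪μ, α t⟫ = 0 := by
        intro t hti
        rcases lt_or_eq_of_le (fact6 t hti) with hlt | h0
        · exfalso
          have hip3 : (0 : ℝ) < ⟪α t, -μ⟫ := by
            rw [inner_neg_right, real_inner_comm]
            linarith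
          have hne3 : α t ≠ -μ := by
            intro h
            have := hcneg i
            rw [← h, csimple, hmi] at this
            simp [hti] at this
          have hsumΔ : α t - (-μ) ∈ Δ := hstring _ (hsimple t) _ hnegΔ hip3 hne3
          have hcs : ∀ s, coeff (α t - (-μ)) s = coeff (α t) s + coeff μ s := by
            intro s
            rw [csub _ (hsimple t) _ hnegΔ hsumΔ s, hcneg s]
            ring
          have hnn : ∀ s, 0 ≤ coeff (α t - (-μ)) s := by
            intro s
            rw [hcs s]
            have := hm s
            have h2 : (0:ℤ) ≤ coeff (α t) s := by
              rw [csimple]; split_ifs <;> omega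
            omega
          have hc2 : coeff (α t - (-μ)) i = 2 := by
            rw [hcs i, csimple, hmi]
            simp [hti]
          have hmem : α t - (-μ) ∈ ({μ} : Set V) := by
            rw [← honly]
            exact ⟨hsumΔ, hnn, hc2⟩
          have heqv : α t - (-μ) = μ := hmem
          rw [sub_neg_eq_add] at heqv
          have : α t = 0 := by simpa using heqv
          exact hα0 t this
        · exact h0
      -- then ⟪μ,μ⟫ = 2X = 2⟪μ,μ⟫, contradiction
      have : ⟪μ, μ⟫ = 2 * X := by
        rw [hsum]
        have : ∀ t ∈ Finset.univ, (coeff μ t : ℝ) * ⟪μ, α t⟫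
            = (if t = i then 2 * X else 0) := by
          intro t _
          by_cases h : t = i
          · subst h; rw [hmi]; simp; exact hXdef.symm
          · simp [h, hzero t h]
        rw [Finset.sum_congr rfl this]
        simp
      rw [← heq] at this
      linarith
  -- main statement
  have main1 : ∀ β ∈ {β ∈ Δ | (∀ t, 0 ≤ coeff β t) ∧ coeff β i = 1},
      μ - β ∈ {β ∈ Δ | (∀ t, 0 ≤ coeff β t) ∧ coeff β i = 1} := by
    rintro β ⟨hβΔ, hc0, hci⟩
    have hcle : ∀ t, coeff β t ≤ coeff μ t := hhighest β hβΔ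
    -- ⟪μ, β⟫ > 0
    have hip : (0 : ℝ) < ⟪μ, β⟫ := by
      have hβsum : ⟪μ, β⟫ = ∑ t, (coeff β t : ℝ) * ⟪μ, α t⟫ := ipμ β hβΔ
      have hdiff : ⟪μ, μ⟫ - ⟪μ, β⟫
          = ∑ t, ((coeff μ t : ℝ) - (coeff β t : ℝ)) * ⟪μ, α t⟫ := by
        rw [hsum, hβsum, ← Finset.sum_sub_distrib]
        congr 1
        funext t
        ring
      have hb : ∀ t ∈ Finset.univ, ((coeff μ t : ℝ) - (coeff β t : ℝ)) * ⟪μ, α t⟫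
          ≤ (if t = i then X else 0) := by
        intro t _
        by_cases h : t = i
        · subst h
          rw [hmi, hci, if_pos rfl]
          push_cast
          linarith [hXdef]
        · simp only [h, if_false]
          have h1 : (0 : ℝ) ≤ (coeff μ t : ℝ) - (coeff β t : ℝ) := by
            have := hcle t
            push_cast
            linarith [(by exact_mod_cast this : (coeff β t : ℝ) ≤ (coeff μ t : ℝ))]
          exact mul_nonpos_of_nonneg_of_nonpos h1 (fact6 t h)
      have hle : ⟪μ, μ⟫ - ⟪μ, β⟫ ≤ X := by
        rw [hdiff]
        calc ∑ t, ((coeff μ t : ℝ) - (coeff β t : ℝ)) * ⟪μ, α t⟫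
            ≤ ∑ t, (if t = i then X else 0) := Finset.sum_le_sum hb
          _ = X := by simp
      linarith
    have hne : μ ≠ β := by
      intro h
      rw [← h, hmi] at hci
      omega
    have hmem : μ - β ∈ Δ := hstring μ hμ β hβΔ hip hne
    have hcs := csub μ hμ β hβΔ hmem
    refine ⟨hmem, ?_, ?_⟩
    · intro t
      rw [hcs t]
      have := hcle t
      omega
    · rw [hcs i, hmi, hci]
      norm_num
  refine ⟨main1, ?_⟩
  ext β
  constructor
  · rintro ⟨h, _⟩
    exact h
  · intro h
    exact ⟨h, (main1 β h).1⟩
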